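/- Behavior cloning compounding error: Suppose a learned policy π, executed for T steps, makes a mistake at each step t with probability at most ε whenever all previous steps were mistake-free, but once a mistake has occurred the policy may err at every subsequent step (probability of mistake bounded by 1). Then the expected total number of mistakes over T steps is at most εT², i.e., ℓ(π) ≤ ε·T². -/

import Mathlib

open MeasureTheory Finset

/-- Behavior cloning compounding error: if the policy makes a mistake at step `t`
with (conditional) probability at most `ε` whenever all previous steps were
mistake-free, then the expected total number of mistakes over `T` steps is at
most `ε·T²`. -/
theorem bc_compounding_error
    {Ω : Type*} [MeasurableSpace Ω] (μ : Measure Ω) [IsProbabilityMeasure μ]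
    (T : ℕ) (ε : ℝ) (hε : 0 ≤ ε)
    (M : ℕ → Ω → ℝ)
    (hMmeas : ∀ t, Measurable (M t))
    (hM01 : ∀ t ω, M t ω = 0 ∨ M t ω = 1)
    (hcond : ∀ t < T,
      μ ({ω | M t ω = 1} ∩ {ω | ∀ s < t, M s ω = 0})
        ≤ ENNReal.ofReal ε * μ {ω | ∀ s < t, M s ω = 0}) :
    ∫ ω, (∑ t ∈ Finset.range T, M t ω) ∂μ ≤ ε * (T : ℝ) ^ 2 := by
  set A : ℕ → Set Ω := fun t => {ω | M t ω = 1} with hA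
  set B : ℕ → Set Ω := fun t => {ω | ∀ s < t, M s ω = 0} with hBdef
  have hAmeas : ∀ t, MeasurableSet (A t) := fun t =>
    (hMmeas t) (measurableSet_singleton 1)
  have hBmeas : ∀ t, MeasurableSet (B t) := by
    intro t
    have : B t = ⋂ s ∈ Finset.range t, {ω | M s ω = 0} := by
      ext ω; simp [hBdef, Finset.mem_range]
    rw [this]
    exact Finset.measurableSet_biInter _ fun s _ => (hMmeas s) (measurableSet_singleton 0)
  -- indicator representation
  have hind : ∀ t ω, M t ω = (A t).indicator (fun _ => (1:ℝ)) ω := by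
    intro t ω
    rcases hM01 t ω with h | h
    · have : ω ∉ A t := by simp [hA, h]
      simp [Set.indicator_of_notMem this, h]
    · have : ω ∈ A t := by simp [hA, h]
      simp [Set.indicator_of_mem this, h]
  have hint : ∀ t, Integrable (M t) μ := by
    intro t
    have : Integrable ((A t).indicator (fun _ => (1:ℝ))) μ :=
      (integrable_const (1:ℝ)).indicator (hAmeas t)
    exact this.congr (Filter.Eventually.of_forall fun ω => (hind t ω).symm)
  have hintval : ∀ t, ∫ ω, M t ω ∂μ = (μ (A t)).toReal := by
    intro t
    calc ∫ ω, M t ω ∂μ = ∫ ω, (A t).indicator (fun _ => (1:ℝ)) ω ∂μ := by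
          exact integral_congr_ae (Filter.Eventually.of_forall fun ω => hind t ω)
      _ = (μ (A t)).toReal := by
          rw [integral_indicator (hAmeas t)]
          simp
          rfl
  -- complement bound
  have hBc : ∀ t ≤ T, μ (B t)ᶜ ≤ t * ENNReal.ofReal ε := by
    intro t
    induction t with
    | zero =>
      intro _
      have : (B 0)ᶜ = ∅ := by
        ext ω; simp [hBdef]
      simp [this]
    | succ n ih =>
      intro hn
      have hn' : n < T := hn
      have hsub : (B (n+1))ᶜ ⊆ (B n)ᶜ ∪ (A n ∩ B n) := by
        intro ω hω
        by_cases h : ω ∈ B n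
        · right
          refine ⟨?_, h⟩
          simp only [hBdef, Set.mem_setOf_eq, Set.mem_compl_iff, not_forall] at hω
          obtain ⟨s, hs, hsne⟩ := hω
          have hsle : s ≤ n := Nat.lt_succ_iff.mp hs
          rcases lt_or_eq_of_le hsle with hlt | rfl
          · exact absurd (h s hlt) hsne
          · rcases hM01 s ω with h0 | h1
            · exact absurd h0 hsne
            · exact h1
        · left; exact h
      calc μ (B (n+1))ᶜ ≤ μ ((B n)ᶜ ∪ (A n ∩ B n)) := measure_mono hsub
        _ ≤ μ (B n)ᶜ + μ (A n ∩ B n) := measure_union_le _ _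
        _ ≤ n * ENNReal.ofReal ε + ENNReal.ofReal ε * μ (B n) := by
            exact add_le_add (ih (le_of_lt hn')) (hcond n hn')
        _ ≤ n * ENNReal.ofReal ε + ENNReal.ofReal ε * 1 := by
            gcongr
            exact prob_le_one
        _ = (n+1 : ℕ) * ENNReal.ofReal ε := by
            push_cast
            ring
  -- main per-step bound
  have hAstep : ∀ t < T, μ (A t) ≤ (T : ℕ) * ENNReal.ofReal ε := by
    intro t ht
    have hsub : A t ⊆ (A t ∩ B t) ∪ (B t)ᶜ := by
      intro ω hω
      by_cases h : ω ∈ B t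
      · left; exact ⟨hω, h⟩
      · right; exact h
    calc μ (A t) ≤ μ ((A t ∩ B t) ∪ (B t)ᶜ) := measure_mono hsub
      _ ≤ μ (A t ∩ B t) + μ (B t)ᶜ := measure_union_le _ _
      _ ≤ ENNReal.ofReal ε * μ (B t) + t * ENNReal.ofReal ε :=
          add_le_add (hcond t ht) (hBc t (le_of_lt ht))
      _ ≤ ENNReal.ofReal ε * 1 + t * ENNReal.ofReal ε := by
          gcongr; exact prob_le_one
      _ = (t+1 : ℕ) * ENNReal.ofReal ε := by push_cast; ring
      _ ≤ (T : ℕ) * ENNReal.ofReal ε := by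
          gcongr
          exact_mod_cast Nat.succ_le_of_lt ht
  have hstepR : ∀ t < T, ∫ ω, M t ω ∂μ ≤ (T : ℝ) * ε := by
    intro t ht
    rw [hintval t]
    have hfin : ((T : ℕ) : ENNReal) * ENNReal.ofReal ε ≠ ⊤ := by
      exact ENNReal.mul_ne_top (ENNReal.natCast_ne_top T) ENNReal.ofReal_ne_top
    have := ENNReal.toReal_mono hfin (hAstep t ht)
    calc (μ (A t)).toReal ≤ (((T : ℕ) : ENNReal) * ENNReal.ofReal ε).toReal := this
      _ = (T : ℝ) * ε := by
          rw [ENNReal.toReal_mul, ENNReal.toReal_ofReal hε]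
          simp
  calc ∫ ω, (∑ t ∈ Finset.range T, M t ω) ∂μ
      = ∑ t ∈ Finset.range T, ∫ ω, M t ω ∂μ := by
        exact integral_finset_sum _ fun t _ => hint t
    _ ≤ ∑ t ∈ Finset.range T, (T : ℝ) * ε := by
        refine Finset.sum_le_sum fun t ht => hstepR t (Finset.mem_range.mp ht)
    _ = ε * (T : ℝ) ^ 2 := by
        simp [Finset.sum_const]
        ring
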